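/- For any triple (α,β,γ) ∈ ℕ³ and any k ∈ ℕ, the box spline symbol B#_{α,β,γ} belongs to the ideal power I^k if and only if k ≤ α + β + γ − max{α,β,γ}; that is, the maximal k with B#_{α,β,γ} ∈ I^k equals α + β + γ − max{α,β,γ}. -/
import Mathlib


open MvPolynomial

/-- The ideal of bivariate real polynomials vanishing at the three points
`(−1,−1), (−1,1), (1,−1)`. -/
noncomputable def vI : Ideal (MvPolynomial (Fin 2) ℝ) where
  carrier := {p | ∀ ε ∈ ({![-1, -1], ![-1, 1], ![1, -1]} : Set (Fin 2 → ℝ)), eval ε p = 0}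
  zero_mem' := by intro ε _; simp
  add_mem' := by intro a b ha hb ε hε; simp [ha ε hε, hb ε hε]
  smul_mem' := by intro c p hp ε hε; simp [smul_eq_mul, hp ε hε]

/-- The normalized three-directional box spline symbol
`B#_{α,β,γ}(z₁,z₂) = ((1+z₁)/2)^α ((1+z₂)/2)^β ((1+z₁z₂)/2)^γ`. -/
noncomputable def Bs (α β γ : ℕ) : MvPolynomial (Fin 2) ℝ :=
  (C (1 / 2 : ℝ) * (1 + X 0)) ^ α * (C (1 / 2 : ℝ) * (1 + X 1)) ^ β *
    (C (1 / 2 : ℝ) * (1 + X 0 * X 1)) ^ γ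

lemma mem_vI {p : MvPolynomial (Fin 2) ℝ} :
    p ∈ vI ↔ ∀ ε ∈ ({![-1, -1], ![-1, 1], ![1, -1]} : Set (Fin 2 → ℝ)), eval ε p = 0 :=
  Iff.rfl

lemma mem_vI' {p : MvPolynomial (Fin 2) ℝ}
    (h1 : eval ![(-1 : ℝ), -1] p = 0) (h2 : eval ![(-1 : ℝ), 1] p = 0)
    (h3 : eval ![(1 : ℝ), -1] p = 0) : p ∈ vI := by
  rw [mem_vI]
  rintro ε (rfl | rfl | rfl) <;> assumption

noncomputable def f1 : MvPolynomial (Fin 2) ℝ := C (1 / 2 : ℝ) * (1 + X 0)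
noncomputable def f2 : MvPolynomial (Fin 2) ℝ := C (1 / 2 : ℝ) * (1 + X 1)
noncomputable def f3 : MvPolynomial (Fin 2) ℝ := C (1 / 2 : ℝ) * (1 + X 0 * X 1)

lemma Bs_eq (α β γ : ℕ) : Bs α β γ = f1 ^ α * f2 ^ β * f3 ^ γ := rfl

lemma h12 : f1 * f2 ∈ vI := by
  apply mem_vI' <;> simp [f1, f2] <;> norm_num

lemma h13 : f1 * f3 ∈ vI := by
  apply mem_vI' <;> simp [f1, f3] <;> norm_num

lemma h23 : f2 * f3 ∈ vI := by
  apply mem_vI' <;> simp [f2, f3] <;> norm_num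

lemma hg1 : (X 0 ^ 2 - 1 : MvPolynomial (Fin 2) ℝ) ∈ vI := by
  apply mem_vI' <;> simp <;> norm_num

lemma hg2 : (X 1 ^ 2 - 1 : MvPolynomial (Fin 2) ℝ) ∈ vI := by
  apply mem_vI' <;> simp <;> norm_num

lemma hg3 : ((1 + X 0) * (1 + X 1) : MvPolynomial (Fin 2) ℝ) ∈ vI := by
  apply mem_vI' <;> simp <;> norm_num

lemma h123 : f1 * f2 * f3 ∈ vI ^ 2 := by
  have e1 : ((X 0 ^ 2 - 1) * (X 1 ^ 2 - 1) +
        ((1 + X 0) * (1 + X 1)) * ((1 + X 0) * (1 + X 1)) : MvPolynomial (Fin 2) ℝ)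
      = C (2 : ℝ) * ((1 + X 0) * (1 + X 1) * (1 + X 0 * X 1)) := by
    have h2 : (C (2 : ℝ) : MvPolynomial (Fin 2) ℝ) = 2 := map_ofNat C 2
    rw [h2]; ring
  have key : f1 * f2 * f3 =
      C (1 / 16 : ℝ) * ((X 0 ^ 2 - 1) * (X 1 ^ 2 - 1) +
        ((1 + X 0) * (1 + X 1)) * ((1 + X 0) * (1 + X 1))) := by
    rw [e1, ← mul_assoc,
      show (C (1 / 16 : ℝ) : MvPolynomial (Fin 2) ℝ) * C (2 : ℝ)
        = C (1 / 2 : ℝ) * (C (1 / 2 : ℝ) * C (1 / 2 : ℝ)) from by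
          rw [← map_mul, ← map_mul, ← map_mul]; norm_num]
    unfold f1 f2 f3
    ring
  rw [key, pow_two]
  exact Ideal.mul_mem_left _ _
    (Ideal.add_mem _ (Ideal.mul_mem_mul hg1 hg2) (Ideal.mul_mem_mul hg3 hg3))

lemma memB : ∀ (n α β γ : ℕ), α + β + γ ≤ n →
    Bs α β γ ∈ vI ^ (α + β + γ - max α (max β γ)) := by
  intro n
  induction n with
  | zero =>
    intro α β γ h
    have : α = 0 ∧ β = 0 ∧ γ = 0 := by omega
    obtain ⟨rfl, rfl, rfl⟩ := this
    simp
  | succ n ih =>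
    intro α β γ h
    by_cases hA : β + γ ≤ α
    · obtain ⟨a', rfl⟩ : ∃ a', α = a' + (β + γ) := ⟨α - (β + γ), by omega⟩
      have hexp : a' + (β + γ) + β + γ - max (a' + (β + γ)) (max β γ) = β + γ := by omega
      rw [hexp]
      have hBs : Bs (a' + (β + γ)) β γ = f1 ^ a' * ((f1 * f2) ^ β * (f1 * f3) ^ γ) := by
        rw [Bs_eq, pow_add, pow_add, mul_pow, mul_pow]; ring
      rw [hBs, pow_add]
      exact Ideal.mul_mem_left _ _
        (Ideal.mul_mem_mul (Ideal.pow_mem_pow h12 β) (Ideal.pow_mem_pow h13 γ))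
    · by_cases hB : α + γ ≤ β
      · obtain ⟨b', rfl⟩ : ∃ b', β = b' + (α + γ) := ⟨β - (α + γ), by omega⟩
        have hexp : α + (b' + (α + γ)) + γ - max α (max (b' + (α + γ)) γ) = α + γ := by omega
        rw [hexp]
        have hBs : Bs α (b' + (α + γ)) γ = f2 ^ b' * ((f1 * f2) ^ α * (f2 * f3) ^ γ) := by
          rw [Bs_eq, pow_add, pow_add, mul_pow, mul_pow]; ring
        rw [hBs, pow_add]
        exact Ideal.mul_mem_left _ _
          (Ideal.mul_mem_mul (Ideal.pow_mem_pow h12 α) (Ideal.pow_mem_pow h23 γ))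
      · by_cases hC : α + β ≤ γ
        · obtain ⟨c', rfl⟩ : ∃ c', γ = c' + (α + β) := ⟨γ - (α + β), by omega⟩
          have hexp : α + β + (c' + (α + β)) - max α (max β (c' + (α + β))) = α + β := by omega
          rw [hexp]
          have hBs : Bs α β (c' + (α + β)) = f3 ^ c' * ((f1 * f3) ^ α * (f2 * f3) ^ β) := by
            rw [Bs_eq, pow_add, pow_add, mul_pow, mul_pow]; ring
          rw [hBs, pow_add]
          exact Ideal.mul_mem_left _ _
            (Ideal.mul_mem_mul (Ideal.pow_mem_pow h13 α) (Ideal.pow_mem_pow h23 β))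
        · -- all of α, β, γ ≥ 1
          obtain ⟨a', rfl⟩ : ∃ a', α = a' + 1 := ⟨α - 1, by omega⟩
          obtain ⟨b', rfl⟩ : ∃ b', β = b' + 1 := ⟨β - 1, by omega⟩
          obtain ⟨c', rfl⟩ : ∃ c', γ = c' + 1 := ⟨γ - 1, by omega⟩
          have hBs : Bs (a' + 1) (b' + 1) (c' + 1) = (f1 * f2 * f3) * Bs a' b' c' := by
            rw [Bs_eq, Bs_eq, pow_succ, pow_succ, pow_succ]; ring
          have ih' := ih a' b' c' (by omega)
          have hmem := Ideal.mul_mem_mul h123 ih'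
          rw [← pow_add] at hmem
          have hexp : a' + 1 + (b' + 1) + (c' + 1) -
              max (a' + 1) (max (b' + 1) (c' + 1)) =
              2 + (a' + b' + c' - max a' (max b' c')) := by omega
          rw [hBs, hexp]
          exact hmem

lemma eval0_aeval (g : Fin 2 → Polynomial ℝ) (q : MvPolynomial (Fin 2) ℝ) :
    Polynomial.eval 0 (aeval g q) = eval (fun i => Polynomial.eval 0 (g i)) q := by
  rw [aeval_def]
  rw [show (Polynomial.eval 0 (eval₂ (algebraMap ℝ (Polynomial ℝ)) g q))
      = (Polynomial.evalRingHom 0) (eval₂ (algebraMap ℝ (Polynomial ℝ)) g q) from rfl]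
  rw [eval₂_comp_left]
  rw [show (Polynomial.evalRingHom 0).comp (algebraMap ℝ (Polynomial ℝ)) = RingHom.id ℝ from
    by ext r; simp]
  rw [eval₂_id]
  rfl

lemma line_dvd (p₁ p₂ : Polynomial ℝ)
    (h0 : (![Polynomial.eval 0 p₁, Polynomial.eval 0 p₂] : Fin 2 → ℝ) ∈
      ({![-1, -1], ![-1, 1], ![1, -1]} : Set (Fin 2 → ℝ)))
    {k : ℕ} {q : MvPolynomial (Fin 2) ℝ} (hq : q ∈ vI ^ k) :
    Polynomial.X ^ k ∣ (aeval ![p₁, p₂] q : Polynomial ℝ) := by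
  set φ : MvPolynomial (Fin 2) ℝ →+* Polynomial ℝ := (aeval ![p₁, p₂]).toRingHom with hφ
  have step : vI ≤ Ideal.comap φ (Ideal.span {Polynomial.X}) := by
    intro r hr
    rw [Ideal.mem_comap, Ideal.mem_span_singleton, Polynomial.X_dvd_iff,
      Polynomial.coeff_zero_eq_eval_zero]
    have : (φ r : Polynomial ℝ) = aeval ![p₁, p₂] r := rfl
    rw [this, eval0_aeval]
    have heq : (fun i => Polynomial.eval 0 ((![p₁, p₂] : Fin 2 → Polynomial ℝ) i)) =
        ![Polynomial.eval 0 p₁, Polynomial.eval 0 p₂] := by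
      funext i; fin_cases i <;> simp
    rw [heq]
    exact hr _ h0
  have step2 : vI ^ k ≤ Ideal.comap φ (Ideal.span {Polynomial.X ^ k}) := by
    rw [← Ideal.span_singleton_pow]
    calc vI ^ k ≤ (Ideal.comap φ (Ideal.span {Polynomial.X})) ^ k :=
          Ideal.pow_right_mono step k
      _ ≤ Ideal.comap φ (Ideal.span {Polynomial.X} ^ k) := by
          rw [← Ideal.map_le_iff_le_comap, Ideal.map_pow]
          exact Ideal.pow_right_mono (Ideal.map_comap_le) k
  have := step2 hq
  rw [Ideal.mem_comap, Ideal.mem_span_singleton] at this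
  exact this

lemma key_le {k n : ℕ} {w : Polynomial ℝ} (hw : Polynomial.eval 0 w ≠ 0)
    (h : Polynomial.X ^ k ∣ Polynomial.X ^ n * w) : k ≤ n := by
  by_contra hk
  push_neg at hk
  have h1 : (Polynomial.X : Polynomial ℝ) ^ (n + 1) ∣ Polynomial.X ^ n * w :=
    dvd_trans (pow_dvd_pow _ (by omega)) h
  rw [pow_succ] at h1
  have h2 : (Polynomial.X : Polynomial ℝ) ∣ w := by
    have hXn : (Polynomial.X : Polynomial ℝ) ^ n ≠ 0 := pow_ne_zero _ Polynomial.X_ne_zero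
    exact (mul_dvd_mul_iff_left hXn).mp h1
  rw [Polynomial.X_dvd_iff, Polynomial.coeff_zero_eq_eval_zero] at h2
  exact hw h2

/-- `B#_{α,β,γ} ∈ I^k` iff `k ≤ α + β + γ − max{α,β,γ}`; i.e. the maximal such `k`
equals `α + β + γ − max{α,β,γ}`. -/
theorem stmt_15 (α β γ k : ℕ) :
    Bs α β γ ∈ vI ^ k ↔ k ≤ α + β + γ - max α (max β γ) := by
  constructor
  · intro hB
    -- line through (−1,−1) in direction (1,1)
    have L1 : k ≤ α + β := by
      have hd := line_dvd (Polynomial.X - 1) (Polynomial.X - 1) (by norm_num) hB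
      have hc : (aeval ![Polynomial.X - 1, Polynomial.X - 1] (Bs α β γ) : Polynomial ℝ)
          = Polynomial.X ^ (α + β) *
            (Polynomial.C (1 / 2 : ℝ) ^ α * Polynomial.C (1 / 2 : ℝ) ^ β *
              (Polynomial.C (1 / 2 : ℝ) *
                (Polynomial.X ^ 2 - 2 * Polynomial.X + 2)) ^ γ) := by
        simp only [Bs, map_mul, map_pow, map_add, map_one, aeval_X, aeval_C,
          Polynomial.algebraMap_eq, Matrix.cons_val_zero, Matrix.cons_val_one, Matrix.head_cons]
        ring
      rw [hc] at hd
      refine key_le ?_ hd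
      simp only [Polynomial.eval_mul, Polynomial.eval_pow, Polynomial.eval_C,
        Polynomial.eval_add, Polynomial.eval_sub, Polynomial.eval_X, Polynomial.eval_ofNat]
      norm_num
    -- line through (−1,1) in direction (1,−1)
    have L2 : k ≤ α + γ := by
      have hd := line_dvd (Polynomial.X - 1) (1 - Polynomial.X) (by norm_num) hB
      have hc0 : (aeval ![Polynomial.X - 1, 1 - Polynomial.X] (Bs α β γ) : Polynomial ℝ)
          = (Polynomial.C (1 / 2 : ℝ) * Polynomial.X) ^ α *
            (Polynomial.C (1 / 2 : ℝ) * (2 - Polynomial.X)) ^ β *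
            (Polynomial.X * (Polynomial.C (1 / 2 : ℝ) * (2 - Polynomial.X))) ^ γ := by
        simp only [Bs, map_mul, map_pow, map_add, map_one, aeval_X, aeval_C,
          Polynomial.algebraMap_eq, Matrix.cons_val_zero, Matrix.cons_val_one, Matrix.head_cons]
        ring
      have hc : (aeval ![Polynomial.X - 1, 1 - Polynomial.X] (Bs α β γ) : Polynomial ℝ)
          = Polynomial.X ^ (α + γ) *
            (Polynomial.C (1 / 2 : ℝ) ^ α *
              (Polynomial.C (1 / 2 : ℝ) * (2 - Polynomial.X)) ^ β *
              (Polynomial.C (1 / 2 : ℝ) * (2 - Polynomial.X)) ^ γ) := by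
        rw [hc0, mul_pow Polynomial.X (Polynomial.C (1 / 2 : ℝ) * (2 - Polynomial.X)) γ]
        ring
      rw [hc] at hd
      refine key_le ?_ hd
      simp only [Polynomial.eval_mul, Polynomial.eval_pow, Polynomial.eval_C,
        Polynomial.eval_sub, Polynomial.eval_X, Polynomial.eval_ofNat]
      norm_num
    -- line through (1,−1) in direction (−1,1)
    have L3 : k ≤ β + γ := by
      have hd := line_dvd (1 - Polynomial.X) (Polynomial.X - 1) (by norm_num) hB
      have hc0 : (aeval ![1 - Polynomial.X, Polynomial.X - 1] (Bs α β γ) : Polynomial ℝ)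
          = (Polynomial.C (1 / 2 : ℝ) * (2 - Polynomial.X)) ^ α *
            (Polynomial.C (1 / 2 : ℝ) * Polynomial.X) ^ β *
            (Polynomial.X * (Polynomial.C (1 / 2 : ℝ) * (2 - Polynomial.X))) ^ γ := by
        simp only [Bs, map_mul, map_pow, map_add, map_one, aeval_X, aeval_C,
          Polynomial.algebraMap_eq, Matrix.cons_val_zero, Matrix.cons_val_one, Matrix.head_cons]
        ring
      have hc : (aeval ![1 - Polynomial.X, Polynomial.X - 1] (Bs α β γ) : Polynomial ℝ)
          = Polynomial.X ^ (β + γ) *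
            ((Polynomial.C (1 / 2 : ℝ) * (2 - Polynomial.X)) ^ α *
              Polynomial.C (1 / 2 : ℝ) ^ β *
              (Polynomial.C (1 / 2 : ℝ) * (2 - Polynomial.X)) ^ γ) := by
        rw [hc0, mul_pow Polynomial.X (Polynomial.C (1 / 2 : ℝ) * (2 - Polynomial.X)) γ]
        ring
      rw [hc] at hd
      refine key_le ?_ hd
      simp only [Polynomial.eval_mul, Polynomial.eval_pow, Polynomial.eval_C,
        Polynomial.eval_sub, Polynomial.eval_X, Polynomial.eval_ofNat]
      norm_num
    omega
  · intro hk
    exact Ideal.pow_le_pow_right hk (memB (α + β + γ) α β γ le_rfl)
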